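/- Let G be a simple graph on the vertex set {1,…,n} and let v : ℝⁿ → ℝⁿ be a C¹ diffeomorphism such that at every point x ∈ ℝⁿ, the Jacobian matrix of v respects G: (∂v_i/∂x_j)(x) = 0 for every pair i ≠ j such that vertex j is not adjacent to some vertex in {i} ∪ (N(i) \ {j}). Then at every point y ∈ ℝⁿ, the Jacobian matrix of the inverse map v⁻¹ respects G as well: (∂(v⁻¹)_i/∂y_j)(y) = 0 for every pair i ≠ j such that vertex j is not adjacent to some vertex in {i} ∪ (N(i) \ {j}). -/

import Mathlib

/-- The (i,j) entry of the Jacobian of `f` at `x`: the j-th partial derivative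
of the i-th component of `f`. -/
noncomputable def pd {n : ℕ} (f : (Fin n → ℝ) → (Fin n → ℝ)) (i j : Fin n)
    (x : Fin n → ℝ) : ℝ :=
  fderiv ℝ f x (Pi.single j 1) i

/-- The pair `(i, j)` is "forbidden" for graph `G` if `i ≠ j` and vertex `j`
is not adjacent to some vertex in `{i} ∪ (N(i) \ {j})`. -/
def Forbidden {n : ℕ} (G : SimpleGraph (Fin n)) (i j : Fin n) : Prop :=
  i ≠ j ∧ ∃ m : Fin n, (m = i ∨ (G.Adj i m ∧ m ≠ j)) ∧ ¬ G.Adj j m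

lemma not_forbidden_trans {n : ℕ} (G : SimpleGraph (Fin n)) {p q r : Fin n}
    (h1 : ¬ Forbidden G p q) (h2 : ¬ Forbidden G q r) : ¬ Forbidden G p r := by
  unfold Forbidden at *
  push_neg at *
  intro hpr m hm
  by_cases hpq : p = q
  · subst hpq; exact h2 hpr m hm
  by_cases hqr : q = r
  · subst hqr; exact h1 hpr m hm
  have hq1 := h1 hpq
  have hq2 := h2 hqr
  rcases hm with rfl | ⟨hadj, hmr⟩
  · exact hq2 m (Or.inr ⟨hq1 m (Or.inl rfl), hpr⟩)
  · by_cases hmq : m = q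
    · subst hmq; exact hq2 m (Or.inl rfl)
    · exact hq2 m (Or.inr ⟨hq1 m (Or.inr ⟨hadj, hmq⟩), hmr⟩)

theorem inverse_jacobian_respects
    {n : ℕ} (G : SimpleGraph (Fin n))
    (v w : (Fin n → ℝ) → (Fin n → ℝ))
    (hv : ContDiff ℝ 1 v) (hw : ContDiff ℝ 1 w)
    (hleft : Function.LeftInverse w v) (hright : Function.RightInverse w v)
    (hJ : ∀ x : Fin n → ℝ, ∀ i j : Fin n, Forbidden G i j → pd v i j x = 0) :
    ∀ y : Fin n → ℝ, ∀ i j : Fin n, Forbidden G i j → pd w i j y = 0 := by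
  intro y i j hij
  have hdv : Differentiable ℝ v := hv.differentiable one_ne_zero
  have hdw : Differentiable ℝ w := hw.differentiable one_ne_zero
  set A := fderiv ℝ v (w y) with hA
  set B := fderiv ℝ w y with hB
  -- B ∘ A = id, from w ∘ v = id
  have hwv : w ∘ v = id := funext hleft
  have hvw : v ∘ w = id := funext hright
  have hBA : ∀ z, B (A z) = z := by
    intro z
    have h1 : fderiv ℝ (w ∘ v) (w y) = (fderiv ℝ w (v (w y))).comp (fderiv ℝ v (w y)) :=
      fderiv_comp (w y) (hdw (v (w y))) (hdv (w y))
    rw [hwv, fderiv_id, hright y] at h1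
    have := congrArg (fun (L : (Fin n → ℝ) →L[ℝ] (Fin n → ℝ)) => L z) h1
    simpa using this.symm
  have hinjA : Function.Injective A := Function.LeftInverse.injective hBA
  -- the subspace W_j
  let W : Submodule ℝ (Fin n → ℝ) :=
    { carrier := {x | ∀ p, Forbidden G p j → x p = 0}
      add_mem' := by intro a b ha hb p hp; simp [ha p hp, hb p hp]
      zero_mem' := by intro p hp; rfl
      smul_mem' := by intro c a ha p hp; simp [ha p hp] }
  -- A maps W into W
  have hAW : ∀ x ∈ W, A x ∈ W := by
    intro x hx p hp
    have hxsum : x = ∑ q, x q • (Pi.single q (1 : ℝ) : Fin n → ℝ) := by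
      funext k
      simp [Pi.single_apply, Finset.sum_apply, mul_comm]
    have : A x = ∑ q, x q • A (Pi.single q (1 : ℝ) : Fin n → ℝ) := by
      conv_lhs => rw [hxsum]
      simp [map_sum, map_smul]
    rw [this]
    rw [Finset.sum_apply]
    apply Finset.sum_eq_zero
    intro q _
    by_cases hqj : Forbidden G q j
    · simp [hx q hqj]
    · have hpq : Forbidden G p q := by
        by_contra hnpq
        exact (not_forbidden_trans G hnpq hqj) hp
      have := hJ (w y) p q hpq
      unfold pd at this
      rw [← hA] at this
      simp [Pi.smul_apply, this]
  -- restrict A to W; injective hence surjective on W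
  let AW : W →ₗ[ℝ] W := LinearMap.restrict (A : (Fin n → ℝ) →ₗ[ℝ] (Fin n → ℝ)) hAW
  have hinjAW : Function.Injective AW := by
    intro a b hab
    apply Subtype.ext
    exact hinjA (congrArg Subtype.val hab)
  have hsurjAW : Function.Surjective AW :=
    (LinearMap.injective_iff_surjective).mp hinjAW
  have hsingle : (Pi.single j (1 : ℝ)) ∈ W := by
    intro p hp
    exact Pi.single_eq_of_ne hp.1 1
  obtain ⟨⟨z, hzW⟩, hz⟩ := hsurjAW ⟨Pi.single j 1, hsingle⟩
  have hAz : A z = Pi.single j 1 := congrArg Subtype.val hz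
  have : B (Pi.single j 1) = z := by rw [← hAz, hBA]
  unfold pd
  rw [← hB, this]
  exact hzW i hij
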